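/- Suppose f : {-1,1}^n → [-1,1] has degree at most d, is invariant under a transitive group of coordinate permutations, and assume the hypercontractive bound ‖g‖_2 ≤ e^{d}‖g‖_1 for all degree-d functions g and the bound Inf^{(1)}[f] ≤ d². Then for all 1 ≤ p ≤ 2, Inf^{(p)}[f] ≤ d^{2p} e^{pd} / n^{p−1}. In particular Var[f] ≤ Inf^{(2)}[f] ≤ d⁴ e^{2d}/n. -/

import Mathlib

open Finset

/-- The Fourier character χ_S evaluated at a point of the Boolean cube
(coordinates encoded by `Bool`, with `true ↦ 1` and `false ↦ -1`). -/
noncomputable def char {n : ℕ} (S : Finset (Fin n)) (x : Fin n → Bool) : ℝ :=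
  ∏ i ∈ S, (if x i then (1 : ℝ) else -1)

/-- The multilinear polynomial with Fourier coefficients `c`, evaluated on the cube. -/
noncomputable def eval' {n : ℕ} (c : Finset (Fin n) → ℝ) (x : Fin n → Bool) : ℝ :=
  ∑ S : Finset (Fin n), c S * char S x

/-- Flip the i-th coordinate. -/
def flipAt {n : ℕ} (x : Fin n → Bool) (i : Fin n) : Fin n → Bool :=
  Function.update x i (!(x i))

/-- Expectation over the uniform measure on the cube. -/
noncomputable def Ex {n : ℕ} (g : (Fin n → Bool) → ℝ) : ℝ :=
  (∑ x : Fin n → Bool, g x) / 2 ^ n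

namespace TIV

variable {n : ℕ}

lemma Ex_sum {ι : Type*} (s : Finset ι) (g : ι → (Fin n → Bool) → ℝ) :
    Ex (fun x => ∑ t ∈ s, g t x) = ∑ t ∈ s, Ex (fun x => g t x) := by
  unfold Ex
  rw [Finset.sum_comm, Finset.sum_div]

lemma Ex_mono {g h : (Fin n → Bool) → ℝ} (hgh : ∀ x, g x ≤ h x) : Ex g ≤ Ex h := by
  unfold Ex
  gcongr with x
  exact hgh x

lemma Ex_nonneg {g : (Fin n → Bool) → ℝ} (hg : ∀ x, 0 ≤ g x) : 0 ≤ Ex g := by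
  unfold Ex
  apply div_nonneg (Finset.sum_nonneg fun x _ => hg x) (by positivity)

lemma Ex_const (a : ℝ) : Ex (fun _ : Fin n → Bool => a) = a := by
  unfold Ex
  simp [Finset.card_univ, mul_comm]

lemma Ex_const_mul (a : ℝ) (g : (Fin n → Bool) → ℝ) :
    Ex (fun x => a * g x) = a * Ex g := by
  unfold Ex; rw [← Finset.mul_sum, mul_div_assoc]

lemma Ex_add (g h : (Fin n → Bool) → ℝ) : Ex (fun x => g x + h x) = Ex g + Ex h := by
  unfold Ex; rw [Finset.sum_add_distrib, add_div]

lemma Ex_comp_perm (σ : Equiv.Perm (Fin n)) (g : (Fin n → Bool) → ℝ) :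
    Ex (fun x => g (fun k => x (σ k))) = Ex g := by
  unfold Ex
  congr 1
  exact Fintype.sum_equiv (Equiv.arrowCongr σ.symm (Equiv.refl Bool)) _ _ (fun x => rfl)

lemma flip_comp_perm (σ : Equiv.Perm (Fin n)) (x : Fin n → Bool) (i : Fin n) :
    (fun k => flipAt x (σ i) (σ k)) = flipAt (fun k => x (σ k)) i := by
  funext k
  simp only [flipAt, Function.update_apply, EmbeddingLike.apply_eq_iff_eq]

lemma Ex_eq_zero {g : (Fin n → Bool) → ℝ} (hg : ∀ x, 0 ≤ g x) (h : Ex g = 0) :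
    ∀ x, g x = 0 := by
  unfold Ex at h
  have hs : ∑ x : Fin n → Bool, g x = 0 := by
    field_simp at h; simpa using h
  intro x
  exact (Finset.sum_eq_zero_iff_of_nonneg (fun y _ => hg y)).1 hs x (Finset.mem_univ x)

lemma char_flipAt (S : Finset (Fin n)) (x : Fin n → Bool) (i : Fin n) :
    char S (flipAt x i) = (if i ∈ S then -1 else 1) * char S x := by
  by_cases h : i ∈ S
  · rw [if_pos h]
    unfold char flipAt
    rw [← Finset.mul_prod_erase S _ h, ← Finset.mul_prod_erase S (fun k => if x k then (1:ℝ) else -1) h]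
    have h1 : ∀ k ∈ S.erase i,
        (if Function.update x i (!(x i)) k then (1:ℝ) else -1) = if x k then 1 else -1 := by
      intro k hk
      rw [Function.update_apply, if_neg (Finset.ne_of_mem_erase hk)]
    rw [Finset.prod_congr rfl h1, Function.update_self]
    cases hx : x i <;> simp
  · rw [if_neg h, one_mul]
    unfold char flipAt
    apply Finset.prod_congr rfl
    intro k hk
    rw [Function.update_apply, if_neg (show ¬(k = i) by rintro rfl; exact h hk)]

lemma eval'_flip_diff (c : Finset (Fin n) → ℝ) (i : Fin n) (x : Fin n → Bool) :
    (eval' c x - eval' c (flipAt x i)) / 2 = eval' (fun S => if i ∈ S then c S else 0) x := by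
  unfold eval'
  rw [← Finset.sum_sub_distrib, Finset.sum_div]
  apply Finset.sum_congr rfl
  intro S _
  rw [char_flipAt]
  by_cases h : i ∈ S <;> simp [h] <;> ring

lemma char_as_univ (S : Finset (Fin n)) (x : Fin n → Bool) :
    char S x = ∏ i : Fin n, (if i ∈ S then (if x i then (1:ℝ) else -1) else 1) := by
  rw [Finset.prod_ite_mem, Finset.univ_inter, char]

lemma sum_char_mul (S T : Finset (Fin n)) :
    ∑ x : Fin n → Bool, char S x * char T x = if S = T then (2:ℝ)^n else 0 := by
  have key : ∑ x : Fin n → Bool, char S x * char T x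
      = ∏ i : Fin n, ∑ b : Bool, ((if i ∈ S then (if b then (1:ℝ) else -1) else 1)
          * (if i ∈ T then (if b then (1:ℝ) else -1) else 1)) := by
    rw [Fintype.prod_sum]
    apply Finset.sum_congr rfl
    intro x _
    rw [char_as_univ, char_as_univ, ← Finset.prod_mul_distrib]
  rw [key]
  have hfac : ∀ i : Fin n, (∑ b : Bool, ((if i ∈ S then (if b then (1:ℝ) else -1) else 1)
      * (if i ∈ T then (if b then (1:ℝ) else -1) else 1)))
      = if ((i ∈ S) ↔ (i ∈ T)) then 2 else 0 := by
    intro i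
    by_cases hS : i ∈ S <;> by_cases hT : i ∈ T <;>
      simp [hS, hT, Fintype.sum_bool] <;> norm_num
  rw [Finset.prod_congr rfl fun i _ => hfac i]
  by_cases hST : S = T
  · subst hST
    simp
  · rw [if_neg hST]
    obtain ⟨i, hi⟩ : ∃ i, ¬((i ∈ S) ↔ (i ∈ T)) := by
      by_contra hc
      push_neg at hc
      exact hST (Finset.ext fun i => (hc i))
    exact Finset.prod_eq_zero (Finset.mem_univ i) (by rw [if_neg hi])

lemma Ex_eval'_sq (c : Finset (Fin n) → ℝ) :
    Ex (fun x => (eval' c x)^2) = ∑ S : Finset (Fin n), (c S)^2 := by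
  unfold Ex eval'
  have h1 : ∀ x : Fin n → Bool, (∑ S : Finset (Fin n), c S * char S x)^2
      = ∑ S : Finset (Fin n), ∑ T : Finset (Fin n), (c S * c T) * (char S x * char T x) := by
    intro x
    rw [sq, Finset.sum_mul_sum]
    exact Finset.sum_congr rfl fun S _ => Finset.sum_congr rfl fun T _ => by ring
  rw [Finset.sum_congr rfl fun x _ => h1 x, Finset.sum_comm]
  have h2 : ∀ S : Finset (Fin n), (∑ x : Fin n → Bool, ∑ T : Finset (Fin n),
      (c S * c T) * (char S x * char T x)) = (c S)^2 * 2^n := by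
    intro S
    rw [Finset.sum_comm]
    have h3 : ∀ T : Finset (Fin n), (∑ x : Fin n → Bool, (c S * c T) * (char S x * char T x))
        = (c S * c T) * (if S = T then (2:ℝ)^n else 0) := by
      intro T
      rw [← Finset.mul_sum, sum_char_mul]
    rw [Finset.sum_congr rfl fun T _ => h3 T]
    simp [Finset.sum_ite_eq, sq]
  rw [Finset.sum_congr rfl fun S _ => h2 S, ← Finset.sum_mul]
  field_simp

lemma Ex_eval' (c : Finset (Fin n) → ℝ) :
    Ex (fun x => eval' c x) = c ∅ := by
  unfold Ex eval'
  rw [Finset.sum_comm]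
  have h3 : ∀ S : Finset (Fin n), (∑ x : Fin n → Bool, c S * char S x)
      = c S * (if S = ∅ then (2:ℝ)^n else 0) := by
    intro S
    have : ∀ x : Fin n → Bool, c S * char S x = c S * (char S x * char ∅ x) := by
      intro x; simp [char]
    rw [Finset.sum_congr rfl fun x _ => this x, ← Finset.mul_sum, sum_char_mul]
  rw [Finset.sum_congr rfl fun S _ => h3 S]
  simp only [mul_ite, mul_zero, Finset.sum_ite_eq, Finset.sum_ite_eq', Finset.mem_univ, if_true]
  field_simp

lemma influence_eq (c : Finset (Fin n) → ℝ) (φ : ℝ → ℝ) (i j : Fin n)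
    (σ : Equiv.Perm (Fin n)) (hσ : σ i = j)
    (hinv : ∀ x, eval' c (fun k => x (σ k)) = eval' c x) :
    Ex (fun x => φ ((eval' c x - eval' c (flipAt x i)) / 2))
      = Ex (fun x => φ ((eval' c x - eval' c (flipAt x j)) / 2)) := by
  have hpt : ∀ x : Fin n → Bool,
      φ ((eval' c (fun k => x (σ k)) - eval' c (flipAt (fun k => x (σ k)) i)) / 2)
      = φ ((eval' c x - eval' c (flipAt x j)) / 2) := by
    intro x
    rw [hinv x, ← flip_comp_perm σ x i, hσ, hinv (flipAt x j)]
  calc Ex (fun x => φ ((eval' c x - eval' c (flipAt x i)) / 2))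
      = Ex (fun x => φ ((eval' c (fun k => x (σ k))
            - eval' c (flipAt (fun k => x (σ k)) i)) / 2)) :=
        (Ex_comp_perm σ (fun x => φ ((eval' c x - eval' c (flipAt x i)) / 2))).symm
    _ = Ex (fun x => φ ((eval' c x - eval' c (flipAt x j)) / 2)) :=
        congrArg Ex (funext hpt)

/-- Interpolation (Hölder) inequality via pointwise weighted AM–GM. -/
lemma interp (p A B : ℝ) (hp1 : 1 ≤ p) (hp2 : p ≤ 2) (g : (Fin n → Bool) → ℝ)
    (hA : Ex (fun x => |g x|) = A) (hB : Ex (fun x => (g x)^2) = B)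
    (hApos : 0 < A) (hBpos : 0 < B) :
    Ex (fun x => |g x| ^ p) ≤ A ^ (2 - p) * B ^ (p - 1) := by
  set C := A ^ (2 - p) * B ^ (p - 1) with hC
  have hCpos : 0 < C := mul_pos (Real.rpow_pos_of_pos hApos _) (Real.rpow_pos_of_pos hBpos _)
  have hpt : ∀ x, |g x| ^ p ≤ ((2 - p) * (|g x| / A) + (p - 1) * ((g x)^2 / B)) * C := by
    intro x
    rcases eq_or_ne (g x) 0 with h0 | h0
    · rw [h0]
      simp [Real.zero_rpow (show p ≠ 0 by linarith)]
    · have habs : 0 < |g x| := abs_pos.2 h0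
      have expand : ((|g x| / A) ^ (2 - p) * ((g x)^2 / B) ^ (p - 1)) * C
          = |g x| ^ (2 - p) * ((g x)^2) ^ (p - 1) := by
        rw [Real.div_rpow (abs_nonneg _) hApos.le, Real.div_rpow (sq_nonneg _) hBpos.le, hC]
        have h1 : A ^ (2 - p) ≠ 0 := ne_of_gt (Real.rpow_pos_of_pos hApos _)
        have h2 : B ^ (p - 1) ≠ 0 := ne_of_gt (Real.rpow_pos_of_pos hBpos _)
        field_simp
      have combine : |g x| ^ (2 - p) * ((g x)^2) ^ (p - 1) = |g x| ^ p := by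
        rw [← sq_abs, ← Real.rpow_natCast |g x| 2, ← Real.rpow_mul (abs_nonneg _),
          ← Real.rpow_add habs]
        congr 1
        push_cast
        ring
      have hgm := Real.geom_mean_le_arith_mean2_weighted
        (show (0:ℝ) ≤ 2 - p by linarith) (show (0:ℝ) ≤ p - 1 by linarith)
        (div_nonneg (abs_nonneg (g x)) hApos.le) (div_nonneg (sq_nonneg (g x)) hBpos.le)
        (by ring)
      calc |g x| ^ p = ((|g x| / A) ^ (2 - p) * ((g x)^2 / B) ^ (p - 1)) * C := by
            rw [expand, combine]
        _ ≤ ((2 - p) * (|g x| / A) + (p - 1) * ((g x)^2 / B)) * C :=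
            mul_le_mul_of_nonneg_right hgm hCpos.le
  have hEx : Ex (fun x => ((2 - p) * (|g x| / A) + (p - 1) * ((g x)^2 / B)) * C) = C := by
    have hfun : (fun x => ((2 - p) * (|g x| / A) + (p - 1) * ((g x)^2 / B)) * C)
        = fun x => ((2 - p) * C / A) * |g x| + ((p - 1) * C / B) * (g x)^2 := by
      funext x; field_simp
    rw [hfun, Ex_add, Ex_const_mul, Ex_const_mul, hA, hB]
    field_simp
    ring
  exact (Ex_mono hpt).trans (le_of_eq hEx)

end TIV

open TIV in
theorem transitive_invariant_variance (n d : ℕ) (hn : 0 < n) (c : Finset (Fin n) → ℝ)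
    (hdeg : ∀ S, c S ≠ 0 → S.card ≤ d)
    (hbd : ∀ x, |eval' c x| ≤ 1)
    (htrans : ∀ i j : Fin n, ∃ σ : Equiv.Perm (Fin n),
      σ i = j ∧ ∀ x : Fin n → Bool, eval' c (fun k => x (σ k)) = eval' c x)
    (hhyper : ∀ c' : Finset (Fin n) → ℝ, (∀ S, c' S ≠ 0 → S.card ≤ d) →
      Real.sqrt (Ex (fun x => (eval' c' x) ^ 2)) ≤ Real.exp d * Ex (fun x => |eval' c' x|))
    (hinf1 : (∑ i : Fin n, Ex (fun x => |(eval' c x - eval' c (flipAt x i)) / 2|))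
      ≤ (d : ℝ) ^ 2) :
    (∀ p : ℝ, 1 ≤ p → p ≤ 2 →
      (∑ i : Fin n, Ex (fun x => |(eval' c x - eval' c (flipAt x i)) / 2| ^ p))
        ≤ (d : ℝ) ^ (2 * p) * Real.exp (p * d) / (n : ℝ) ^ (p - 1)) ∧
    (Ex (fun x => (eval' c x) ^ 2) - (Ex (fun x => eval' c x)) ^ 2
      ≤ ∑ i : Fin n, Ex (fun x => ((eval' c x - eval' c (flipAt x i)) / 2) ^ 2)) ∧
    (∑ i : Fin n, Ex (fun x => ((eval' c x - eval' c (flipAt x i)) / 2) ^ 2)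
      ≤ (d : ℝ) ^ 4 * Real.exp (2 * d) / n) := by
  have hn0 : (0:ℝ) < n := by exact_mod_cast hn
  have hd0 : (0:ℝ) ≤ d := Nat.cast_nonneg d
  -- abbreviations
  set A : Fin n → ℝ := fun i => Ex (fun x => |(eval' c x - eval' c (flipAt x i)) / 2|) with hAdef
  set B : Fin n → ℝ := fun i => Ex (fun x => ((eval' c x - eval' c (flipAt x i)) / 2) ^ 2)
    with hBdef
  have hAeq : ∀ i j : Fin n, A i = A j := by
    intro i j
    obtain ⟨σ, hσ, hinv⟩ := htrans i j
    exact influence_eq c (fun t => |t|) i j σ hσ hinv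
  have hAnonneg : ∀ i, 0 ≤ A i := fun i => Ex_nonneg (fun x => abs_nonneg _)
  have hBnonneg : ∀ i, 0 ≤ B i := fun i => Ex_nonneg (fun x => sq_nonneg _)
  have hAle : ∀ i, A i ≤ (d:ℝ)^2 / n := by
    intro i
    rw [le_div_iff₀ hn0]
    have hsum : ∑ j : Fin n, A j = A i * n := by
      rw [Finset.sum_congr rfl fun j _ => hAeq j i]
      simp [Finset.card_univ, mul_comm]
    calc A i * n = ∑ j : Fin n, A j := hsum.symm
      _ ≤ (d:ℝ)^2 := hinf1
  have hBle : ∀ i, B i ≤ (Real.exp d * A i)^2 := by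
    intro i
    have hdeg' : ∀ S, (if i ∈ S then c S else 0) ≠ 0 → S.card ≤ d := by
      intro S hS
      by_cases h : i ∈ S
      · exact hdeg S (by simpa [h] using hS)
      · simp [h] at hS
    have h := hhyper (fun S => if i ∈ S then c S else 0) hdeg'
    have e1 : Ex (fun x => (eval' (fun S => if i ∈ S then c S else 0) x) ^ 2) = B i := by
      rw [hBdef]
      exact congrArg Ex (funext fun x => by rw [eval'_flip_diff])
    have e2 : Ex (fun x => |eval' (fun S => if i ∈ S then c S else 0) x|) = A i := by
      rw [hAdef]
      exact congrArg Ex (funext fun x => by rw [eval'_flip_diff])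
    rw [e1, e2] at h
    calc B i = Real.sqrt (B i) ^ 2 := (Real.sq_sqrt (hBnonneg i)).symm
      _ ≤ (Real.exp d * A i)^2 := by
          apply pow_le_pow_left₀ (Real.sqrt_nonneg _) h
  -- Part 1
  have part1 : ∀ p : ℝ, 1 ≤ p → p ≤ 2 →
      (∑ i : Fin n, Ex (fun x => |(eval' c x - eval' c (flipAt x i)) / 2| ^ p))
        ≤ (d : ℝ) ^ (2 * p) * Real.exp (p * d) / (n : ℝ) ^ (p - 1) := by
    intro p hp1 hp2
    have hp0 : (0:ℝ) < p := by linarith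
    have key : ∀ i : Fin n, Ex (fun x => |(eval' c x - eval' c (flipAt x i)) / 2| ^ p)
        ≤ Real.exp (p * d) * ((d:ℝ)^2 / n) ^ p := by
      intro i
      have hRHS : (0:ℝ) ≤ Real.exp (p * d) * ((d:ℝ)^2 / n) ^ p := by
        apply mul_nonneg (Real.exp_pos _).le (Real.rpow_nonneg (by positivity) _)
      rcases eq_or_lt_of_le (hAnonneg i) with hA0 | hApos
      · -- A i = 0 : the function vanishes identically
        have hzero := Ex_eq_zero (g := fun x => |(eval' c x - eval' c (flipAt x i)) / 2|)
          (fun x => abs_nonneg _) hA0.symm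
        have : Ex (fun x => |(eval' c x - eval' c (flipAt x i)) / 2| ^ p) = 0 := by
          rw [show (fun x => |(eval' c x - eval' c (flipAt x i)) / 2| ^ p)
              = fun _ : Fin n → Bool => (0:ℝ) from funext fun x => by
                rw [show |(eval' c x - eval' c (flipAt x i)) / 2| = 0 from hzero x,
                  Real.zero_rpow (ne_of_gt hp0)]]
          exact Ex_const 0
        rw [this]; exact hRHS
      · have hBpos : 0 < B i := by
          rcases eq_or_lt_of_le (hBnonneg i) with hB0 | h
          · exfalso
            have hz := Ex_eq_zero (g := fun x => ((eval' c x - eval' c (flipAt x i)) / 2) ^ 2)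
              (fun x => sq_nonneg _) hB0.symm
            have : A i = 0 := by
              have hAi : A i = Ex (fun x => |(eval' c x - eval' c (flipAt x i)) / 2|) := rfl
              rw [hAi]
              rw [show (fun x => |(eval' c x - eval' c (flipAt x i)) / 2|)
                  = fun _ : Fin n → Bool => (0:ℝ) from funext fun x => by
                    rw [abs_eq_zero]
                    exact pow_eq_zero_iff (n := 2) (by norm_num) |>.1
                      (show ((eval' c x - eval' c (flipAt x i)) / 2) ^ 2 = 0 from hz x)]
              exact Ex_const 0
            rw [this] at hApos; exact lt_irrefl 0 hApos
          · exact h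
        have hmain := interp p (A i) (B i) hp1 hp2 _ rfl rfl hApos hBpos
        refine hmain.trans ?_
        have step1 : (A i) ^ (2 - p) * (B i) ^ (p - 1)
            ≤ (A i) ^ (2 - p) * ((Real.exp d * A i)^2) ^ (p - 1) := by
          apply mul_le_mul_of_nonneg_left _ (Real.rpow_nonneg (hAnonneg i) _)
          exact Real.rpow_le_rpow (hBnonneg i) (hBle i) (by linarith)
        refine step1.trans ?_
        have eA : ((A i)^(2:ℕ)) ^ (p - 1) = (A i) ^ (2 * (p - 1)) := by
          rw [← Real.rpow_natCast (A i) 2, ← Real.rpow_mul (hAnonneg i)]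
          norm_num
        have eE : ((Real.exp d)^(2:ℕ)) ^ (p - 1) = Real.exp (2 * d * (p - 1)) := by
          rw [sq, ← Real.exp_add, ← Real.exp_mul]
          congr 1
          ring
        have expand : (A i) ^ (2 - p) * ((Real.exp d * A i)^2) ^ (p - 1)
            = Real.exp (2 * d * (p - 1)) * (A i) ^ p := by
          calc (A i) ^ (2 - p) * ((Real.exp d * A i)^2) ^ (p - 1)
              = (A i) ^ (2 - p) * (((Real.exp d)^(2:ℕ)) ^ (p - 1) * ((A i)^(2:ℕ)) ^ (p - 1)) := by
                rw [mul_pow, Real.mul_rpow (by positivity) (sq_nonneg _)]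
            _ = Real.exp (2 * d * (p - 1)) * ((A i) ^ (2 - p) * (A i) ^ (2 * (p - 1))) := by
                rw [eA, eE]; ring
            _ = Real.exp (2 * d * (p - 1)) * (A i) ^ p := by
                rw [← Real.rpow_add hApos,
                  show (2 - p) + 2 * (p - 1) = p by ring]
        rw [expand]
        apply mul_le_mul (Real.exp_le_exp.2 ?_)
          (Real.rpow_le_rpow (hAnonneg i) (hAle i) hp0.le)
          (Real.rpow_nonneg (hAnonneg i) p) (Real.exp_pos _).le
        nlinarith [mul_nonneg hd0 (show (0:ℝ) ≤ 2 - p by linarith)]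
    calc (∑ i : Fin n, Ex (fun x => |(eval' c x - eval' c (flipAt x i)) / 2| ^ p))
        ≤ ∑ _i : Fin n, Real.exp (p * d) * ((d:ℝ)^2 / n) ^ p :=
          Finset.sum_le_sum fun i _ => key i
      _ = n * (Real.exp (p * d) * ((d:ℝ)^2 / n) ^ p) := by
          simp [Finset.card_univ, mul_comm]
      _ = (d : ℝ) ^ (2 * p) * Real.exp (p * d) / (n : ℝ) ^ (p - 1) := by
          have h1 : ((d:ℝ)^2 / n) ^ p = (d:ℝ) ^ (2 * p) / (n:ℝ) ^ p := by
            rw [Real.div_rpow (sq_nonneg _) hn0.le, ← Real.rpow_natCast (d:ℝ) 2,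
              ← Real.rpow_mul hd0]
            norm_num
          have hnp : (0:ℝ) < (n:ℝ) ^ p := Real.rpow_pos_of_pos hn0 p
          rw [h1, Real.rpow_sub hn0, Real.rpow_one]
          field_simp
  refine ⟨part1, ?_, ?_⟩
  · -- Part 2 : Poincaré via Parseval
    have hR : ∀ i : Fin n, B i = ∑ S : Finset (Fin n), (if i ∈ S then c S else 0)^2 := by
      intro i
      have hBi : B i = Ex (fun x => ((eval' c x - eval' c (flipAt x i)) / 2) ^ 2) := rfl
      rw [hBi, show (fun x => ((eval' c x - eval' c (flipAt x i)) / 2) ^ 2)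
          = fun x => (eval' (fun S => if i ∈ S then c S else 0) x) ^ 2 from
        funext fun x => by rw [eval'_flip_diff]]
      exact Ex_eval'_sq _
    have hswap : ∑ i : Fin n, B i = ∑ S : Finset (Fin n), (S.card : ℝ) * (c S)^2 := by
      rw [Finset.sum_congr rfl fun i _ => hR i, Finset.sum_comm]
      apply Finset.sum_congr rfl
      intro S _
      have hite : ∀ i : Fin n, (if i ∈ S then c S else 0)^2 = if i ∈ S then (c S)^2 else 0 := by
        intro i; split_ifs <;> simp
      rw [Finset.sum_congr rfl fun i _ => hite i, Finset.sum_ite_mem, Finset.univ_inter,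
        Finset.sum_const, nsmul_eq_mul]
    calc Ex (fun x => (eval' c x)^2) - (Ex (fun x => eval' c x))^2
        = ∑ S : Finset (Fin n), (c S)^2 - (c ∅)^2 := by rw [Ex_eval'_sq, Ex_eval']
      _ ≤ ∑ S : Finset (Fin n), (S.card : ℝ) * (c S)^2 := by
          rw [← Finset.add_sum_erase _ (fun S => (c S)^2) (Finset.mem_univ (∅ : Finset (Fin n))),
            ← Finset.add_sum_erase _ (fun S => ((S.card : ℝ) * (c S)^2))
              (Finset.mem_univ (∅ : Finset (Fin n)))]
          simp only [Finset.card_empty, Nat.cast_zero, zero_mul, zero_add, add_sub_cancel_left]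
          apply Finset.sum_le_sum
          intro S hS
          have h1 : 1 ≤ (S.card : ℝ) := by
            have := Finset.card_pos.2 (Finset.nonempty_of_ne_empty (Finset.ne_of_mem_erase hS))
            exact_mod_cast this
          nlinarith [sq_nonneg (c S)]
      _ = ∑ i : Fin n, B i := hswap.symm
  · -- Part 3 : part 1 at p = 2
    have h1 := part1 2 one_le_two le_rfl
    have e1 : ∀ i : Fin n, Ex (fun x => |(eval' c x - eval' c (flipAt x i)) / 2| ^ (2:ℝ)) = B i := by
      intro i
      have hBi : B i = Ex (fun x => ((eval' c x - eval' c (flipAt x i)) / 2) ^ 2) := rfl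
      rw [hBi]
      refine congrArg Ex (funext fun x => ?_)
      rw [show ((2:ℝ)) = ((2:ℕ):ℝ) by norm_num, Real.rpow_natCast, sq_abs]
    rw [Finset.sum_congr rfl fun i _ => e1 i] at h1
    refine h1.trans (le_of_eq ?_)
    rw [show (2:ℝ) * 2 = ((4:ℕ):ℝ) by norm_num, Real.rpow_natCast,
      show (2:ℝ) - 1 = 1 by norm_num, Real.rpow_one]
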